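/- Rieger unwinding: Let (G,R) be a cyclically ordered group. Define on the set uw(G) = Z \times G the order (m,g) \leq (m',g') iff (m,g)=(m',g') or m<m' or (m=m' and (R(e,g,g') or g=e)), and the group law (k,g)\cdot(m,h) = (k+m,gh) if g=e or h=e or R(e,g,gh), (k+m+1,gh) if R(e,gh,g), and (k+m+1,e) if gh=e \neq g. Then (uw(G),\cdot,\leq) is a totally ordered group. -/

import Mathlib

/-- A cyclically ordered group: a ternary relation satisfying R1-R5. -/
def IsCyclicOrder {G : Type*} [Group G] (R : G → G → G → Prop) : Prop :=
  (∀ x y z : G, R x y z → x ≠ y ∧ y ≠ z ∧ z ≠ x) ∧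
  (∀ x y z : G, x ≠ y → y ≠ z → z ≠ x → R x y z ∨ R x z y) ∧
  (∀ x y z : G, R x y z → R y z x) ∧
  (∀ x y z u : G, R x y z → R y u z → R x u z) ∧
  (∀ x y z u v : G, R x y z → R (u * x * v) (u * y * v) (u * z * v))

open scoped Classical in
/-- The group law of the Rieger unwinding on `ℤ × G`:
`(k,g)·(m,h) = (k+m, g*h)` if `g = 1` or `h = 1` or `R 1 g (g*h)`,
`(k+m+1, g*h)` if `R 1 (g*h) g`, and `(k+m+1, 1)` if `g*h = 1 ≠ g`. -/
noncomputable def uwMul {G : Type*} [Group G] (R : G → G → G → Prop)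
    (p q : ℤ × G) : ℤ × G :=
  if p.2 = 1 ∨ q.2 = 1 ∨ R 1 p.2 (p.2 * q.2) then (p.1 + q.1, p.2 * q.2)
  else if R 1 (p.2 * q.2) p.2 then (p.1 + q.1 + 1, p.2 * q.2)
  else (p.1 + q.1 + 1, 1)

/-- The order of the Rieger unwinding on `ℤ × G`:
`(m,g) ≤ (m',g')` iff they are equal, or `m < m'`, or `m = m'` and (`R 1 g g'` or `g = 1`). -/
def uwLe {G : Type*} [Group G] (R : G → G → G → Prop) (p q : ℤ × G) : Prop :=
  p = q ∨ p.1 < q.1 ∨ (p.1 = q.1 ∧ (R 1 p.2 q.2 ∨ p.2 = 1))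

section Proof

namespace UWAux

variable {G : Type*} [Group G] {R : G → G → G → Prop}

variable (hR : IsCyclicOrder R)
include hR

lemma rot {x y z : G} (h : R x y z) : R y z x := hR.2.2.1 x y z h

lemma r4 {x y z u : G} (h1 : R x y z) (h2 : R y u z) : R x u z := hR.2.2.2.1 x y z u h1 h2

lemma tot {x y z : G} (h1 : x ≠ y) (h2 : y ≠ z) (h3 : z ≠ x) : R x y z ∨ R x z y :=
  hR.2.1 x y z h1 h2 h3

lemma asym {x y z : G} (h1 : R x y z) (h2 : R x z y) : False :=
  (hR.1 x x z (r4 hR h1 (rot hR (rot hR h2)))).1 rfl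

lemma nofix {x : G} (h : R 1 x 1) : False := (hR.1 1 x 1 h).2.2 rfl

lemma transl (u : G) {x y z : G} (h : R x y z) : R (u*x) (u*y) (u*z) := by
  simpa using hR.2.2.2.2 x y z u 1 h

lemma transr (v : G) {x y z : G} (h : R x y z) : R (x*v) (y*v) (z*v) := by
  simpa using hR.2.2.2.2 x y z 1 v h

lemma trans {x a b c : G} (h1 : R x a b) (h2 : R x b c) : R x a c :=
  rot hR (rot hR (r4 hR (rot hR h1) (rot hR h2)))

lemma mid {x a b c : G} (h1 : R x a b) (h2 : R x b c) : R a b c :=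
  rot hR (rot hR (trans hR (rot hR h2) (rot hR (rot hR h1))))

lemma translIff (u : G) {x y : G} : R 1 x y ↔ R u (u*x) (u*y) := by
  constructor
  · intro h
    simpa using transl hR u h
  · intro h
    have := transl hR u⁻¹ h
    simpa using this

lemma K {a c : G} (ha : a ≠ 1) (hc : c ≠ 1) (h1 : R 1 c (a*c)) (h2 : R 1 (a*c) a) :
    False := by
  have s1 : R 1 c a := trans hR h1 h2
  have s2 : R c (a*c) a := mid hR h1 h2
  have s3 : R 1 a (a*c⁻¹) := by simpa using transr hR c⁻¹ s2
  have s4 : R 1 (a*c⁻¹) c⁻¹ := by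
    have := transr hR c⁻¹ s1
    simp only [one_mul, mul_inv_cancel] at this
    exact rot hR this
  have s5 : R 1 a c⁻¹ := trans hR s3 s4
  have s6 : R 1 c⁻¹ (a*c)⁻¹ := by
    have := transl hR (a*c)⁻¹ h2
    simp only [mul_one, inv_mul_cancel] at this
    have h' : (a*c)⁻¹ * a = c⁻¹ := by group
    rw [h'] at this
    exact rot hR this
  have s7 : R 1 (a*c)⁻¹ a⁻¹ := by
    have := transr hR (a*c)⁻¹ h1
    simp only [one_mul, mul_inv_cancel] at this
    have h' : c * (a*c)⁻¹ = a⁻¹ := by group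
    rw [h'] at this
    exact rot hR (rot hR this)
  have s8 : R 1 c⁻¹ a⁻¹ := trans hR s6 s7
  have s9 : R 1 a⁻¹ c := by
    have := transl hR a⁻¹ h2
    simp only [mul_one, inv_mul_cancel] at this
    have h' : a⁻¹ * (a*c) = c := by group
    rw [h'] at this
    exact rot hR (rot hR this)
  exact asym hR (trans hR (trans hR s5 s8) s9) s1

lemma K' {a c : G} (ha : a ≠ 1) (hc : c ≠ 1) (h1 : R 1 a (a*c)) (h2 : R 1 (a*c) c) :
    False := by
  have s1 : R 1 a c := trans hR h1 h2
  have s2 : R a (a*c) c := mid hR h1 h2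
  have s3 : R 1 c (a⁻¹*c) := by
    have := transl hR a⁻¹ s2
    simp only [inv_mul_cancel, inv_mul_cancel_left] at this
    exact this
  have s4 : R 1 (a⁻¹*c) a⁻¹ := by
    have := transl hR a⁻¹ s1
    simp only [mul_one, inv_mul_cancel] at this
    exact rot hR this
  have s5 : R 1 c a⁻¹ := trans hR s3 s4
  have s6 : R 1 a⁻¹ (a*c)⁻¹ := by
    have := transr hR (a*c)⁻¹ h2
    simp only [one_mul, mul_inv_cancel] at this
    have h' : c * (a*c)⁻¹ = a⁻¹ := by group
    rw [h'] at this
    exact rot hR this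
  have s7 : R 1 (a*c)⁻¹ c⁻¹ := by
    have := transl hR (a*c)⁻¹ h1
    simp only [mul_one, inv_mul_cancel] at this
    have h' : (a*c)⁻¹ * a = c⁻¹ := by group
    rw [h'] at this
    exact rot hR (rot hR this)
  have s8 : R 1 a⁻¹ c⁻¹ := trans hR s6 s7
  have s9 : R 1 c⁻¹ a := by
    have := transr hR c⁻¹ h2
    simp only [one_mul, mul_inv_cancel, mul_inv_cancel_right] at this
    exact rot hR (rot hR this)
  exact asym hR (trans hR (trans hR s5 s8) s9) s1

lemma N {b c : G} (hb : b ≠ 1) (hc : c ≠ 1) (h : R 1 b (b*c)) : R 1 c (b*c) := by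
  by_contra hn
  have hbc : b*c ≠ 1 := (hR.1 _ _ _ h).2.2
  have h2 : c ≠ b*c := fun e => hb (by
    have : b * c = 1 * c := by rw [← e, one_mul]
    exact mul_right_cancel this)
  rcases tot hR (Ne.symm hc) h2 hbc with h' | h'
  · exact hn h'
  · exact K' hR hb hc h h'

lemma N' {a c : G} (ha : a ≠ 1) (hc : c ≠ 1) (h : R 1 c (a*c)) : R 1 a (a*c) := by
  by_contra hn
  have hac : a*c ≠ 1 := (hR.1 _ _ _ h).2.2
  have h2 : a ≠ a*c := fun e => hc (left_eq_mul.mp e)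
  rcases tot hR (Ne.symm ha) h2 hac with h' | h'
  · exact hn h'
  · exact K hR ha hc h h'

end UWAux

namespace UWAux

open scoped Classical

noncomputable def eps {G : Type*} [Group G] (R : G → G → G → Prop) (g h : G) : ℤ :=
  if g = 1 ∨ h = 1 ∨ R 1 g (g * h) then 0 else 1

variable {G : Type*} [Group G] {R : G → G → G → Prop}

lemma eps_nonneg (g h : G) : 0 ≤ eps R g h := by
  unfold eps; split_ifs <;> norm_num

lemma eps_le_one (g h : G) : eps R g h ≤ 1 := by
  unfold eps; split_ifs <;> norm_num

lemma eps_cases (g h : G) : eps R g h = 0 ∨ eps R g h = 1 := by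
  unfold eps; split_ifs <;> simp

lemma eps_one_left (h : G) : eps R 1 h = 0 := by simp [eps]

lemma eps_one_right (g : G) : eps R g 1 = 0 := by simp [eps]

lemma eps_eq_zero_iff {g h : G} : eps R g h = 0 ↔ (g = 1 ∨ h = 1 ∨ R 1 g (g * h)) := by
  unfold eps; split_ifs with hc <;> simp [hc]

lemma eps_eq_one_iff {g h : G} : eps R g h = 1 ↔ ¬(g = 1 ∨ h = 1 ∨ R 1 g (g * h)) := by
  unfold eps; split_ifs with hc <;> simp [hc]

variable (hR : IsCyclicOrder R)
include hR

lemma uwMul_eq (p q : ℤ × G) :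
    uwMul R p q = (p.1 + q.1 + eps R p.2 q.2, p.2 * q.2) := by
  unfold uwMul eps
  split_ifs with h1 h2
  · simp
  · rfl
  · push_neg at h1
    obtain ⟨hg, hh, hnR⟩ := h1
    have hone : p.2 * q.2 = 1 := by
      by_contra hne
      have hne2 : p.2 ≠ p.2 * q.2 := fun e => hh (left_eq_mul.mp e)
      rcases tot hR (Ne.symm hg) hne2 hne with h | h
      · exact hnR h
      · exact h2 h
    rw [hone]

lemma cocycle (g h k : G) :
    eps R g h + eps R (g * h) k = eps R h k + eps R g (h * k) := by
  by_cases hg : g = 1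
  · subst hg; simp [eps_one_left, one_mul]
  by_cases hh : h = 1
  · subst hh; simp [eps_one_left, eps_one_right, one_mul, mul_one]
  by_cases hk : k = 1
  · subst hk; simp [eps_one_left, eps_one_right, one_mul, mul_one]
  by_cases hgh : g * h = 1
  · have hinv : h = g⁻¹ := eq_inv_of_mul_eq_one_right hgh
    have hgk : g * (h * k) = k := by rw [← mul_assoc, hgh, one_mul]
    have e1 : eps R g h = 1 := by
      have hx : ¬ R 1 g (g * h) := by rw [hgh]; exact nofix hR
      simp [eps, hg, hh, hx]
    have e2 : eps R (g * h) k = 0 := by simp [eps, hgh]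
    by_cases hhk : h * k = 1
    · have e3 : eps R h k = 1 := by
        have hx : ¬ R 1 h (h * k) := by rw [hhk]; exact nofix hR
        simp [eps, hh, hk, hx]
      have e4 : eps R g (h * k) = 0 := by simp [eps, hhk]
      omega
    · have hgk' : g ≠ k := by
        intro e
        exact hhk (by rw [hinv, ← e, inv_mul_cancel])
      rcases tot hR (Ne.symm hg) hgk' hk with hr | hr
      · have e4 : eps R g (h * k) = 0 := by
          have : R 1 g (g * (h * k)) := by rw [hgk]; exact hr
          simp [eps, this]
        have e3 : eps R h k = 1 := by
          have hx : ¬ R 1 h (h * k) := by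
            intro hc
            have := transl hR g hc
            rw [mul_one, hgh, hgk] at this
            exact asym hR hr (rot hR this)
          simp [eps, hh, hk, hx]
        omega
      · have e4 : eps R g (h * k) = 1 := by
          have hx : ¬ R 1 g (g * (h * k)) := by
            rw [hgk]; intro hc; exact asym hR hc hr
          simp [eps, hg, hhk, hx]
        have e3 : eps R h k = 0 := by
          have hc : R 1 h (h * k) := by
            have := transl hR g⁻¹ hr
            rw [mul_one, inv_mul_cancel] at this
            have := rot hR (rot hR this)
            rw [hinv]
            exact this
          simp [eps, hc]
        omega
  by_cases hhk : h * k = 1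
  · have e3 : eps R h k = 1 := by
      have hx : ¬ R 1 h (h * k) := by rw [hhk]; exact nofix hR
      simp [eps, hh, hk, hx]
    have e4 : eps R g (h * k) = 0 := by simp [eps, hhk]
    have hghk : g * h * k = g := by rw [mul_assoc, hhk, mul_one]
    rcases tot hR (Ne.symm hg) (fun e => hh (left_eq_mul.mp e)) hgh with hr | hr
    · have e1 : eps R g h = 0 := by simp [eps, hr]
      have e2 : eps R (g * h) k = 1 := by
        have hx : ¬ R 1 (g * h) (g * h * k) := by
          rw [hghk]; intro hc; exact asym hR hr hc
        simp [eps, hgh, hk, hx]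
      omega
    · have e1 : eps R g h = 1 := by
        have hx : ¬ R 1 g (g * h) := fun hc => asym hR hc hr
        simp [eps, hg, hh, hx]
      have e2 : eps R (g * h) k = 0 := by
        have : R 1 (g * h) (g * h * k) := by rw [hghk]; exact hr
        simp [eps, this]
      omega
  by_cases hghk : g * h * k = 1
  · have hgassoc : g * (h * k) = 1 := by rw [← mul_assoc]; exact hghk
    have hkinv : h * k = g⁻¹ := eq_inv_of_mul_eq_one_right hgassoc
    have e2 : eps R (g * h) k = 1 := by
      have hx : ¬ R 1 (g * h) (g * h * k) := by rw [hghk]; exact nofix hR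
      simp [eps, hgh, hk, hx]
    have e4 : eps R g (h * k) = 1 := by
      have hx : ¬ R 1 g (g * (h * k)) := by rw [hgassoc]; exact nofix hR
      simp [eps, hg, hhk, hx]
    by_cases hA : R 1 g (g * h)
    · have e1 : eps R g h = 0 := by simp [eps, hA]
      have e3 : eps R h k = 0 := by
        have := transl hR g⁻¹ hA
        rw [mul_one, inv_mul_cancel, inv_mul_cancel_left] at this
        have hc : R 1 h (h * k) := by rw [hkinv]; exact rot hR this
        simp [eps, hc]
      omega
    · have e1 : eps R g h = 1 := by simp [eps, hg, hh, hA]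
      have e3 : eps R h k = 1 := by
        have hx : ¬ R 1 h (h * k) := by
          intro hc
          rw [hkinv] at hc
          have := transl hR g (rot hR (rot hR hc))
          rw [mul_inv_cancel, mul_one] at this
          exact hA this
        simp [eps, hh, hk, hx]
      omega
  -- main case: everything nontrivial
  · have hCiff : R 1 h (h * k) ↔ R g (g * h) (g * h * k) := by
      rw [mul_assoc]; exact translIff hR g
    have n1g : (1:G) ≠ g := Ne.symm hg
    have n1gh : (1:G) ≠ g * h := Ne.symm hgh
    have n1ghk : (1:G) ≠ g * h * k := Ne.symm hghk
    have ng_gh : g ≠ g * h := fun e => hh (left_eq_mul.mp e)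
    have ngh_ghk : g * h ≠ g * h * k := fun e => hk (left_eq_mul.mp e)
    have ng_ghk : g ≠ g * h * k := by
      rw [mul_assoc]; exact fun e => hhk (left_eq_mul.mp e)
    by_cases hA : R 1 g (g * h)
    · have e1 : eps R g h = 0 := by simp [eps, hA]
      by_cases hB : R 1 (g * h) (g * h * k)
      · have e2 : eps R (g * h) k = 0 := by simp [eps, hB]
        have e4 : eps R g (h * k) = 0 := by
          have : R 1 g (g * (h * k)) := by rw [← mul_assoc]; exact trans hR hA hB
          simp [eps, this]
        have e3 : eps R h k = 0 := by
          have : R 1 h (h * k) := hCiff.mpr (mid hR hA hB)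
          simp [eps, this]
        omega
      · have e2 : eps R (g * h) k = 1 := by simp [eps, hgh, hk, hB]
        have hB' : R 1 (g * h * k) (g * h) := by
          rcases tot hR n1gh ngh_ghk (Ne.symm (Ne.symm n1ghk).symm) with hr | hr
          · exact absurd hr hB
          · exact hr
        by_cases hD : R 1 g (g * h * k)
        · have e4 : eps R g (h * k) = 0 := by
            have : R 1 g (g * (h * k)) := by rw [← mul_assoc]; exact hD
            simp [eps, this]
          have e3 : eps R h k = 1 := by
            have hx : ¬ R 1 h (h * k) := by
              intro hc
              exact asym hR (hCiff.mp hc) (mid hR hD hB')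
            simp [eps, hh, hk, hx]
          omega
        · have hD' : R 1 (g * h * k) g := by
            rcases tot hR n1g ng_ghk n1ghk.symm with hr | hr
            · exact absurd hr hD
            · exact hr
          have e4 : eps R g (h * k) = 1 := by
            have hx : ¬ R 1 g (g * (h * k)) := by rw [← mul_assoc]; exact hD
            simp [eps, hg, hhk, hx]
          have e3 : eps R h k = 0 := by
            have : R 1 h (h * k) := hCiff.mpr (rot hR (mid hR hD' hA))
            simp [eps, this]
          omega
    · have e1 : eps R g h = 1 := by simp [eps, hg, hh, hA]
      have hA' : R 1 (g * h) g := by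
        rcases tot hR n1g ng_gh n1gh.symm with hr | hr
        · exact absurd hr hA
        · exact hr
      by_cases hB : R 1 (g * h) (g * h * k)
      · have e2 : eps R (g * h) k = 0 := by simp [eps, hB]
        by_cases hD : R 1 g (g * h * k)
        · have e4 : eps R g (h * k) = 0 := by
            have : R 1 g (g * (h * k)) := by rw [← mul_assoc]; exact hD
            simp [eps, this]
          have e3 : eps R h k = 1 := by
            have hx : ¬ R 1 h (h * k) := by
              intro hc
              exact asym hR (hCiff.mp hc) (rot hR (mid hR hA' hD))
            simp [eps, hh, hk, hx]
          omega
        · have hD' : R 1 (g * h * k) g := by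
            rcases tot hR n1g ng_ghk n1ghk.symm with hr | hr
            · exact absurd hr hD
            · exact hr
          have e4 : eps R g (h * k) = 1 := by
            have hx : ¬ R 1 g (g * (h * k)) := by rw [← mul_assoc]; exact hD
            simp [eps, hg, hhk, hx]
          have e3 : eps R h k = 0 := by
            have : R 1 h (h * k) := hCiff.mpr (rot hR (rot hR (mid hR hB hD')))
            simp [eps, this]
          omega
      · have e2 : eps R (g * h) k = 1 := by simp [eps, hgh, hk, hB]
        have hB' : R 1 (g * h * k) (g * h) := by
          rcases tot hR n1gh ngh_ghk n1ghk.symm with hr | hr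
          · exact absurd hr hB
          · exact hr
        have e3 : eps R h k = 1 := by
          have hx : ¬ R 1 h (h * k) := by
            intro hc
            exact asym hR (hCiff.mp hc) (rot hR (rot hR (mid hR hB' hA')))
          simp [eps, hh, hk, hx]
        have e4 : eps R g (h * k) = 1 := by
          have hx : ¬ R 1 g (g * (h * k)) := by
            rw [← mul_assoc]
            intro hc
            exact asym hR hc (trans hR hB' hA')
          simp [eps, hg, hhk, hx]
        omega

end UWAux

namespace UWAux
variable {G : Type*} [Group G] {R : G → G → G → Prop}

lemma uwLe_mk_lt {m n : ℤ} {x y : G} (h : m < n) : uwLe R (m,x) (n,y) :=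
  Or.inr (Or.inl h)

lemma uwLe_mk_eq {m n : ℤ} {x y : G} (h : m = n) (h2 : R 1 x y ∨ x = 1) :
    uwLe R (m,x) (n,y) := Or.inr (Or.inr ⟨h, h2⟩)

variable (hR : IsCyclicOrder R)
include hR

lemma M {c a b : G} (h1 : eps R c a = 1) (h2 : eps R c b = 0) :
    R 1 (c*a) (c*b) ∨ c*a = 1 := by
  have h1' := eps_eq_one_iff.mp h1; push_neg at h1'
  obtain ⟨hc, ha, hnR⟩ := h1'
  by_cases hca : c*a = 1
  · exact Or.inr hca
  have hra : R 1 (c*a) c := by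
    rcases tot hR (Ne.symm hc) (fun e => ha (left_eq_mul.mp e)) hca with hr | hr
    · exact absurd hr hnR
    · exact hr
  rcases eps_eq_zero_iff.mp h2 with h | h | h
  · exact absurd h hc
  · subst h; rw [mul_one]; exact Or.inl hra
  · exact Or.inl (trans hR hra h)

lemma M' {a b c : G} (h1 : eps R a c = 1) (h2 : eps R b c = 0) :
    R 1 (a*c) (b*c) ∨ a*c = 1 := by
  have h1' := eps_eq_one_iff.mp h1; push_neg at h1'
  obtain ⟨ha, hc, hnR⟩ := h1'
  by_cases hac : a*c = 1
  · exact Or.inr hac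
  have hra : R 1 (a*c) c := by
    rcases tot hR (Ne.symm hc) (fun e => ha (mul_eq_right.mp e.symm)) hac with hr | hr
    · exact absurd (N' hR ha hc hr) hnR
    · exact hr
  left
  rcases eps_eq_zero_iff.mp h2 with h | h | h
  · subst h; rw [one_mul]; exact hra
  · exact absurd h hc
  · by_cases hb : b = 1
    · subst hb; rw [one_mul]; exact hra
    · exact trans hR hra (N hR hb hc h)

lemma Lmul (r p q : ℤ × G) (h : uwLe R p q) :
    uwLe R (uwMul R r p) (uwMul R r q) := by
  rcases h with rfl | hlt | ⟨he, hor⟩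
  · exact Or.inl rfl
  · rw [uwMul_eq hR, uwMul_eq hR]
    rcases lt_or_ge (r.1 + p.1 + eps R r.2 p.2) (r.1 + q.1 + eps R r.2 q.2) with hlt2 | hge
    · exact uwLe_mk_lt hlt2
    · have b1 := eps_le_one (R := R) r.2 p.2
      have b2 := eps_nonneg (R := R) r.2 q.2
      have h1 : eps R r.2 p.2 = 1 := by omega
      have h2 : eps R r.2 q.2 = 0 := by omega
      apply uwLe_mk_eq (by omega)
      rcases M hR h1 h2 with h | h
      · exact Or.inl h
      · exact Or.inr h
  · rcases hor with hab | ha1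
    · have hne := hR.1 _ _ _ hab
      by_cases hc : r.2 = 1
      · rw [uwMul_eq hR, uwMul_eq hR]
        apply uwLe_mk_eq
        · rw [hc, eps_one_left, eps_one_left, he]
        · left; rw [hc, one_mul, one_mul]; exact hab
      · have htr : R r.2 (r.2 * p.2) (r.2 * q.2) := (translIff hR r.2).mp hab
        rw [uwMul_eq hR, uwMul_eq hR]
        rcases eps_cases (R := R) r.2 p.2 with ea | ea <;>
          rcases eps_cases (R := R) r.2 q.2 with eb | eb
        · apply uwLe_mk_eq (by rw [ea, eb, he])
          left
          rcases eps_eq_zero_iff.mp eb with h' | h' | h'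
          · exact absurd h' hc
          · exact absurd h' hne.2.2
          · exact r4 hR h' htr
        · exact uwLe_mk_lt (by omega)
        · exfalso
          have h1' := eps_eq_one_iff.mp ea; push_neg at h1'
          obtain ⟨-, hpne, hnRa⟩ := h1'
          have h' : R 1 r.2 (r.2 * q.2) := by
            rcases eps_eq_zero_iff.mp eb with h' | h' | h'
            · exact absurd h' hc
            · exact absurd h' hne.2.2
            · exact h'
          by_cases hca : r.2 * p.2 = 1
          · rw [hca] at htr
            exact asym hR h' (rot hR htr)
          · have hra : R 1 (r.2 * p.2) r.2 := by
              rcases tot hR (Ne.symm hc) (fun e => hpne (left_eq_mul.mp e)) hca with hr | hr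
              · exact absurd hr hnRa
              · exact hr
            exact asym hR (mid hR hra h') (rot hR htr)
        · have h1' := eps_eq_one_iff.mp ea; push_neg at h1'
          obtain ⟨-, hpne, hnRa⟩ := h1'
          apply uwLe_mk_eq (by rw [ea, eb, he])
          by_cases hca : r.2 * p.2 = 1
          · exact Or.inr hca
          · left
            have hra : R 1 (r.2 * p.2) r.2 := by
              rcases tot hR (Ne.symm hc) (fun e => hpne (left_eq_mul.mp e)) hca with hr | hr
              · exact absurd hr hnRa
              · exact hr
            by_cases hcb : r.2 * q.2 = 1
            · exfalso
              rw [hcb] at htr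
              exact hnRa (rot hR (rot hR htr))
            · exact mid hR (rot hR (rot hR hra)) htr
    · by_cases hb1 : q.2 = 1
      · have hpq : p = q := Prod.ext he (ha1.trans hb1.symm)
        rw [hpq]
        exact Or.inl rfl
      · rw [uwMul_eq hR, uwMul_eq hR]
        have ea : eps R r.2 p.2 = 0 := by rw [ha1]; exact eps_one_right r.2
        rcases eps_cases (R := R) r.2 q.2 with eb | eb
        · apply uwLe_mk_eq (by rw [ea, eb, he])
          rcases eps_eq_zero_iff.mp eb with h' | h' | h'
          · right; rw [ha1, mul_one]; exact h'
          · exact absurd h' hb1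
          · left; rw [ha1, mul_one]; exact h'
        · exact uwLe_mk_lt (by omega)

lemma Rmul (s p q : ℤ × G) (h : uwLe R p q) :
    uwLe R (uwMul R p s) (uwMul R q s) := by
  rcases h with rfl | hlt | ⟨he, hor⟩
  · exact Or.inl rfl
  · rw [uwMul_eq hR, uwMul_eq hR]
    rcases lt_or_ge (p.1 + s.1 + eps R p.2 s.2) (q.1 + s.1 + eps R q.2 s.2) with hlt2 | hge
    · exact uwLe_mk_lt hlt2
    · have b1 := eps_le_one (R := R) p.2 s.2
      have b2 := eps_nonneg (R := R) q.2 s.2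
      have h1 : eps R p.2 s.2 = 1 := by omega
      have h2 : eps R q.2 s.2 = 0 := by omega
      apply uwLe_mk_eq (by omega)
      rcases M' hR h1 h2 with h | h
      · exact Or.inl h
      · exact Or.inr h
  · rcases hor with hab | ha1
    · have hne := hR.1 _ _ _ hab
      have hane : p.2 ≠ 1 := Ne.symm hne.1
      have hbne : q.2 ≠ 1 := hne.2.2
      by_cases hc : s.2 = 1
      · rw [uwMul_eq hR, uwMul_eq hR]
        apply uwLe_mk_eq
        · rw [hc, eps_one_right, eps_one_right, he]
        · left; rw [hc, mul_one, mul_one]; exact hab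
      · have htr : R s.2 (p.2 * s.2) (q.2 * s.2) := by
          simpa using transr hR s.2 hab
        rw [uwMul_eq hR, uwMul_eq hR]
        rcases eps_cases (R := R) p.2 s.2 with ea | ea <;>
          rcases eps_cases (R := R) q.2 s.2 with eb | eb
        · apply uwLe_mk_eq (by rw [ea, eb, he])
          left
          rcases eps_eq_zero_iff.mp eb with h' | h' | h'
          · exact absurd h' hbne
          · exact absurd h' hc
          · exact r4 hR (N hR hbne hc h') htr
        · exact uwLe_mk_lt (by omega)
        · exfalso
          have h1' := eps_eq_one_iff.mp ea; push_neg at h1'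
          obtain ⟨-, -, hnRa⟩ := h1'
          have h' : R 1 s.2 (q.2 * s.2) := by
            rcases eps_eq_zero_iff.mp eb with h' | h' | h'
            · exact absurd h' hbne
            · exact absurd h' hc
            · exact N hR hbne hc h'
          by_cases hca : p.2 * s.2 = 1
          · rw [hca] at htr
            exact asym hR h' (rot hR htr)
          · have hra : R 1 (p.2 * s.2) s.2 := by
              have hnc : ¬ R 1 s.2 (p.2 * s.2) := fun hr => hnRa (N' hR hane hc hr)
              rcases tot hR (Ne.symm hc) (fun e => hane (mul_eq_right.mp e.symm)) hca with hr | hr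
              · exact absurd hr hnc
              · exact hr
            exact asym hR (mid hR hra h') (rot hR htr)
        · have h1' := eps_eq_one_iff.mp ea; push_neg at h1'
          obtain ⟨-, -, hnRa⟩ := h1'
          apply uwLe_mk_eq (by rw [ea, eb, he])
          by_cases hca : p.2 * s.2 = 1
          · exact Or.inr hca
          · left
            have hnc : ¬ R 1 s.2 (p.2 * s.2) := fun hr => hnRa (N' hR hane hc hr)
            have hra : R 1 (p.2 * s.2) s.2 := by
              rcases tot hR (Ne.symm hc) (fun e => hane (mul_eq_right.mp e.symm)) hca with hr | hr
              · exact absurd hr hnc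
              · exact hr
            by_cases hcb : q.2 * s.2 = 1
            · exfalso
              rw [hcb] at htr
              exact hnc (rot hR (rot hR htr))
            · exact mid hR (rot hR (rot hR hra)) htr
    · by_cases hb1 : q.2 = 1
      · have hpq : p = q := Prod.ext he (ha1.trans hb1.symm)
        rw [hpq]
        exact Or.inl rfl
      · rw [uwMul_eq hR, uwMul_eq hR]
        have ea : eps R p.2 s.2 = 0 := by rw [ha1]; exact eps_one_left s.2
        rcases eps_cases (R := R) q.2 s.2 with eb | eb
        · apply uwLe_mk_eq (by rw [ea, eb, he])
          rcases eps_eq_zero_iff.mp eb with h' | h' | h'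
          · exact absurd h' hb1
          · right; rw [ha1, one_mul]; exact h'
          · have hcs : s.2 ≠ 1 := fun e => (hR.1 _ _ _ h').2.1 (by rw [e, mul_one])
            left; rw [ha1, one_mul]; exact N hR hb1 hcs h'
        · exact uwLe_mk_lt (by omega)

end UWAux

end Proof

open UWAux in
/-- The Rieger unwound `(uw(G), ·, ≤)` of a cyclically ordered group is a
totally ordered group. -/
theorem uw_is_totally_ordered_group {G : Type*} [Group G]
    (R : G → G → G → Prop) (hR : IsCyclicOrder R) :
    (∀ p q r : ℤ × G, uwMul R (uwMul R p q) r = uwMul R p (uwMul R q r)) ∧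
    (∀ p : ℤ × G, uwMul R ((0 : ℤ), (1 : G)) p = p ∧ uwMul R p ((0 : ℤ), (1 : G)) = p) ∧
    (∀ p : ℤ × G, ∃ q : ℤ × G,
      uwMul R p q = ((0 : ℤ), (1 : G)) ∧ uwMul R q p = ((0 : ℤ), (1 : G))) ∧
    (∀ p : ℤ × G, uwLe R p p) ∧
    (∀ p q : ℤ × G, uwLe R p q → uwLe R q p → p = q) ∧
    (∀ p q r : ℤ × G, uwLe R p q → uwLe R q r → uwLe R p r) ∧
    (∀ p q : ℤ × G, uwLe R p q ∨ uwLe R q p) ∧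
    (∀ p q r s : ℤ × G, uwLe R p q → uwLe R (uwMul R r (uwMul R p s)) (uwMul R r (uwMul R q s))) := by
  refine ⟨?_, ?_, ?_, ?_, ?_, ?_, ?_, ?_⟩
  · -- associativity
    intro p q r
    rw [uwMul_eq hR, uwMul_eq hR, uwMul_eq hR, uwMul_eq hR]
    have hco := cocycle hR p.2 q.2 r.2
    simp only [Prod.mk.injEq]
    constructor
    · omega
    · exact mul_assoc _ _ _
  · -- identity
    intro p
    constructor
    · rw [uwMul_eq hR]
      simp [eps_one_left]
    · rw [uwMul_eq hR]
      simp [eps_one_right]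
  · -- inverses
    intro p
    by_cases hg : p.2 = 1
    · refine ⟨(-p.1, 1), ?_, ?_⟩
      · rw [uwMul_eq hR]
        simp [eps_one_right, hg]
      · rw [uwMul_eq hR]
        simp [eps_one_left, hg]
    · refine ⟨(-p.1 - 1, p.2⁻¹), ?_, ?_⟩
      · rw [uwMul_eq hR]
        have he : eps R p.2 p.2⁻¹ = 1 := by
          rw [eps_eq_one_iff]
          push_neg
          refine ⟨hg, by simpa using hg, ?_⟩
          rw [mul_inv_cancel]
          exact nofix hR
        rw [he]
        simp [mul_inv_cancel]
        omega
      · rw [uwMul_eq hR]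
        have he : eps R p.2⁻¹ p.2 = 1 := by
          rw [eps_eq_one_iff]
          push_neg
          refine ⟨by simpa using hg, hg, ?_⟩
          rw [inv_mul_cancel]
          exact nofix hR
        rw [he]
        simp [inv_mul_cancel]
        omega
  · -- reflexivity
    intro p
    exact Or.inl rfl
  · -- antisymmetry
    intro p q h1 h2
    rcases h1 with rfl | h1 | ⟨he1, ho1⟩
    · rfl
    · rcases h2 with rfl | h2 | ⟨he2, _⟩
      · rfl
      · omega
      · omega
    · rcases h2 with rfl | h2 | ⟨he2, ho2⟩
      · rfl
      · omega
      · rcases ho1 with hr1 | hs1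
        · rcases ho2 with hr2 | hs2
          · exact absurd hr2 (fun h => asym hR hr1 h)
          · exact absurd hr1 (by rw [hs2]; exact nofix hR)
        · rcases ho2 with hr2 | hs2
          · exact absurd hr2 (by rw [hs1]; exact nofix hR)
          · exact Prod.ext he1 (hs1.trans hs2.symm)
  · -- transitivity
    intro p q r h1 h2
    rcases h1 with rfl | h1 | ⟨he1, ho1⟩
    · exact h2
    · rcases h2 with rfl | h2 | ⟨he2, _⟩
      · exact Or.inr (Or.inl h1)
      · exact Or.inr (Or.inl (h1.trans h2))
      · exact Or.inr (Or.inl (by omega))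
    · rcases h2 with rfl | h2 | ⟨he2, ho2⟩
      · exact Or.inr (Or.inr ⟨he1, ho1⟩)
      · exact Or.inr (Or.inl (by omega))
      · refine Or.inr (Or.inr ⟨he1.trans he2, ?_⟩)
        rcases ho1 with hr1 | hs1
        · rcases ho2 with hr2 | hs2
          · exact Or.inl (trans hR hr1 hr2)
          · exact absurd hr1 (by rw [hs2]; exact nofix hR)
        · exact Or.inr hs1
  · -- totality
    intro p q
    by_cases hpq : p = q
    · exact Or.inl (Or.inl hpq)
    rcases lt_trichotomy p.1 q.1 with hlt | he | hgt
    · exact Or.inl (Or.inr (Or.inl hlt))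
    · by_cases ha : p.2 = 1
      · exact Or.inl (Or.inr (Or.inr ⟨he, Or.inr ha⟩))
      by_cases hb : q.2 = 1
      · exact Or.inr (Or.inr (Or.inr ⟨he.symm, Or.inr hb⟩))
      have hne : p.2 ≠ q.2 := fun e => hpq (Prod.ext he e)
      rcases tot hR (Ne.symm ha) hne hb with hr | hr
      · exact Or.inl (Or.inr (Or.inr ⟨he, Or.inl hr⟩))
      · exact Or.inr (Or.inr (Or.inr ⟨he.symm, Or.inl hr⟩))
    · exact Or.inr (Or.inr (Or.inl hgt))
  · -- translation invariance
    intro p q r s h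
    exact Lmul hR r _ _ (Rmul hR s p q h)
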